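/- arXiv:2402.04935 — 4 statements merged into one kernel-verified Lean document; each statement's English description precedes it below -/
import Mathlib

section
/- Let H_1, …, H_m be finitely many affine hyperplanes in ℝ^n, and let d(x,S) := inf_{y∈S} ‖x−y‖_∞ denote the supremum-norm distance from a point to a set. Then there exists a constant Γ>0 such that for every nonempty F ⊆ {1,…,m} with ⋂_{i∈F} H_i ≠ ∅ and every x∈ℝ^n: d(x, ⋂_{i∈F} H_i) ≤ Γ · max_{i∈F} d(x, H_i). -/
open Metric Set

/-- Pointwise residual bound: the residual of a single equation is at most the ℓ¹-norm of
its coefficient vector times the sup-distance to its solution hyperplane. -/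
lemma resid_le_norm_mul_infDist {n : ℕ} (v : Fin n → ℝ) (c : ℝ)
    (hne : ({y : Fin n → ℝ | ∑ j, v j * y j = c}).Nonempty) (x : Fin n → ℝ) :
    |(∑ j, v j * x j) - c| ≤ (∑ j, |v j|) * Metric.infDist x {y : Fin n → ℝ | ∑ j, v j * y j = c} := by
  have key : ∀ y ∈ {y : Fin n → ℝ | ∑ j, v j * y j = c},
      |(∑ j, v j * x j) - c| ≤ (∑ j, |v j|) * dist x y := by
    intro y hy
    have hy' : ∑ j, v j * y j = c := hy
    have : (∑ j, v j * x j) - c = ∑ j, v j * (x j - y j) := by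
      rw [← hy']
      rw [← Finset.sum_sub_distrib]
      congr 1; ext j; ring
    rw [this]
    calc |∑ j, v j * (x j - y j)| ≤ ∑ j, |v j * (x j - y j)| := Finset.abs_sum_le_sum_abs _ _
      _ ≤ ∑ j, |v j| * dist x y := by
          apply Finset.sum_le_sum
          intro j _
          rw [abs_mul]
          exact mul_le_mul_of_nonneg_left (by simpa [Real.dist_eq] using dist_le_pi_dist x y j)
            (abs_nonneg _)
      _ = (∑ j, |v j|) * dist x y := by rw [← Finset.sum_mul]
  by_contra h
  push_neg at h
  rcases eq_or_lt_of_le (Finset.sum_nonneg (fun j _ => abs_nonneg (v j))) with hz | hz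
  · obtain ⟨y₀, hy₀⟩ := hne
    have := key y₀ hy₀
    rw [← hz] at this h
    simp at this h
    exact h this
  · have h2 : Metric.infDist x {y : Fin n → ℝ | ∑ j, v j * y j = c}
        < |(∑ j, v j * x j) - c| / (∑ j, |v j|) := by
      rw [lt_div_iff₀ hz]
      linarith [mul_comm (∑ j, |v j|) (Metric.infDist x {y : Fin n → ℝ | ∑ j, v j * y j = c})]
    obtain ⟨y, hy, hdy⟩ := (Metric.infDist_lt_iff hne).mp h2
    have := key y hy
    rw [lt_div_iff₀ hz] at hdy
    nlinarith

/-- Hoffman-type bound for a compatible system of linear equations (sup norm). -/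
lemma hoffman_key {n : ℕ} {κ : Type*} [Fintype κ] (A : κ → (Fin n → ℝ)) (c : κ → ℝ)
    (x₀ : Fin n → ℝ) (hx₀ : ∀ i, ∑ j, A i j * x₀ j = c i) :
    ∃ Γ : ℝ, 0 < Γ ∧ ∀ x : Fin n → ℝ,
      Metric.infDist x {y : Fin n → ℝ | ∀ i, ∑ j, A i j * y j = c i}
        ≤ Γ * ‖(fun i => (∑ j, A i j * x j) - c i : κ → ℝ)‖ := by
  classical
  let L : (Fin n → ℝ) →ₗ[ℝ] (κ → ℝ) :=
    { toFun := fun x i => ∑ j, A i j * x j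
      map_add' := by
        intro x y; funext i
        simp [mul_add, Finset.sum_add_distrib]
      map_smul' := by
        intro r x; funext i
        simp [Finset.mul_sum]
        congr 1; ext j; ring }
  haveI : IsClosed ((LinearMap.ker L : Submodule ℝ (Fin n → ℝ)) : Set (Fin n → ℝ)) :=
    Submodule.closed_of_finiteDimensional _
  obtain ⟨K, hK, hanti⟩ := LinearMap.exists_antilipschitzWith
    ((LinearMap.ker L).liftQ L le_rfl)
    (Submodule.ker_liftQ_eq_bot _ _ _ le_rfl)
  refine ⟨K, hK, fun x => ?_⟩
  -- the solution set is a translate of the kernel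
  have hset : {y : Fin n → ℝ | ∀ i, ∑ j, A i j * y j = c i}
      = (fun y => x₀ + y) '' ((LinearMap.ker L : Submodule ℝ (Fin n → ℝ)) : Set (Fin n → ℝ)) := by
    ext y
    constructor
    · intro hy
      refine ⟨y - x₀, ?_, by module⟩
      simp only [SetLike.mem_coe, LinearMap.mem_ker]
      funext i
      show ∑ j, A i j * (y j - x₀ j) = 0
      have : ∑ j, A i j * (y j - x₀ j) = (∑ j, A i j * y j) - ∑ j, A i j * x₀ j := by
        rw [← Finset.sum_sub_distrib]; congr 1; ext j; ring
      rw [this, hy i, hx₀ i, sub_self]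
    · rintro ⟨z, hz, rfl⟩
      simp only [SetLike.mem_coe, LinearMap.mem_ker] at hz
      intro i
      have hz' : ∑ j, A i j * z j = 0 := congrFun hz i
      have h3 : ∑ j, A i j * (x₀ j + z j) = (∑ j, A i j * x₀ j) + ∑ j, A i j * z j := by
        rw [← Finset.sum_add_distrib]; congr 1; ext j; ring
      show ∑ j, A i j * (x₀ + z) j = c i
      simp only [Pi.add_apply]
      rw [h3, hz', hx₀ i, add_zero]
  rw [hset]
  have hx : x = (fun y => x₀ + y) (x - x₀) := by simp
  have htrans : Metric.infDist x ((fun y => x₀ + y) ''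
        ((LinearMap.ker L : Submodule ℝ (Fin n → ℝ)) : Set (Fin n → ℝ)))
      = Metric.infDist (x - x₀) ((LinearMap.ker L : Submodule ℝ (Fin n → ℝ)) : Set (Fin n → ℝ)) := by
    conv_lhs => rw [hx]
    exact Metric.infDist_image (IsometryEquiv.addLeft x₀).isometry
  rw [htrans]
  have hquot : Metric.infDist (x - x₀)
        ((LinearMap.ker L : Submodule ℝ (Fin n → ℝ)) : Set (Fin n → ℝ))
      = ‖(Submodule.Quotient.mk (x - x₀) : (Fin n → ℝ) ⧸ LinearMap.ker L)‖ :=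
    (QuotientAddGroup.norm_mk (S := (LinearMap.ker L).toAddSubgroup) (x - x₀)).symm
  rw [hquot]
  have hd := hanti.le_mul_dist (Submodule.Quotient.mk (x - x₀) : (Fin n → ℝ) ⧸ LinearMap.ker L) 0
  simp only [map_zero, dist_zero_right] at hd
  refine hd.trans ?_
  have : (LinearMap.ker L).liftQ L le_rfl (Submodule.Quotient.mk (x - x₀)) =
      (fun i => (∑ j, A i j * x j) - c i : κ → ℝ) := by
    rw [Submodule.liftQ_apply, map_sub]
    funext i
    show (∑ j, A i j * x j) - ∑ j, A i j * x₀ j = _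
    rw [hx₀ i]
  rw [this]

/-- For finitely many affine hyperplanes in `ℝⁿ` (with the sup norm),
there is a constant `Γ > 0` such that for every compatible subfamily `F`, the distance
from any point to the common intersection of the hyperplanes in `F` is at most `Γ`
times the maximum distance to an individual hyperplane of `F`. -/
theorem dist_to_hyperplane_intersection (n m : ℕ)
    (a : Fin m → (Fin n → ℝ)) (b : Fin m → ℝ) (ha : ∀ i, a i ≠ 0) :
    ∃ Γ : ℝ, 0 < Γ ∧
      ∀ (F : Finset (Fin m)) (hF : F.Nonempty),
        (⋂ i ∈ F, {x : Fin n → ℝ | ∑ j, a i j * x j = b i}).Nonempty →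
        ∀ x : Fin n → ℝ,
          Metric.infDist x (⋂ i ∈ F, {y : Fin n → ℝ | ∑ j, a i j * y j = b i})
            ≤ Γ * F.sup' hF
                (fun i => Metric.infDist x {y : Fin n → ℝ | ∑ j, a i j * y j = b i}) := by
  classical
  have hchoice : ∀ F : Finset (Fin m), ∃ Γ : ℝ, 0 < Γ ∧
      ((⋂ i ∈ F, {x : Fin n → ℝ | ∑ j, a i j * x j = b i}).Nonempty →
        ∀ x : Fin n → ℝ,
          Metric.infDist x (⋂ i ∈ F, {y : Fin n → ℝ | ∑ j, a i j * y j = b i})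
            ≤ Γ * ‖(fun i : ↥F => (∑ j, a i.1 j * x j) - b i.1 : ↥F → ℝ)‖) := by
    intro F
    by_cases hne : (⋂ i ∈ F, {x : Fin n → ℝ | ∑ j, a i j * x j = b i}).Nonempty
    · obtain ⟨x₀, hx₀⟩ := hne
      simp only [Set.mem_iInter, Set.mem_setOf_eq] at hx₀
      obtain ⟨Γ, hΓ, hb⟩ := hoffman_key (κ := ↥F) (fun i => a i.1) (fun i => b i.1) x₀
        (fun i => hx₀ i.1 i.2)
      refine ⟨Γ, hΓ, fun _ x => ?_⟩
      have hseteq : (⋂ i ∈ F, {y : Fin n → ℝ | ∑ j, a i j * y j = b i})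
          = {y : Fin n → ℝ | ∀ i : ↥F, ∑ j, a i.1 j * y j = b i.1} := by
        ext y
        simp only [Set.mem_iInter, Set.mem_setOf_eq, Subtype.forall]
      rw [hseteq]
      exact hb x
    · exact ⟨1, one_pos, fun h => absurd h hne⟩
  choose g hg0 hg using hchoice
  set N : ℝ := 1 + ∑ i, ∑ j, |a i j| with hNdef
  have hNpos : 0 < N := by positivity
  have hNge : ∀ i : Fin m, (∑ j, |a i j|) ≤ N := by
    intro i
    have h1 : (∑ j, |a i j|) ≤ ∑ i, ∑ j, |a i j| :=
      Finset.single_le_sum (f := fun i => ∑ j, |a i j|)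
        (fun i _ => Finset.sum_nonneg fun j _ => abs_nonneg _) (Finset.mem_univ i)
    linarith
  set G : ℝ := Finset.univ.sup' ⟨∅, Finset.mem_univ _⟩ g with hGdef
  have hGF : ∀ F : Finset (Fin m), g F ≤ G := fun F => Finset.le_sup' g (Finset.mem_univ F)
  have hGpos : 0 < G := lt_of_lt_of_le (hg0 ∅) (hGF ∅)
  refine ⟨G * N, by positivity, fun F hF hne x => ?_⟩
  set M := F.sup' hF (fun i => Metric.infDist x {y : Fin n → ℝ | ∑ j, a i j * y j = b i})
    with hMdef
  have hMnonneg : 0 ≤ M := by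
    obtain ⟨i0, hi0⟩ := hF
    exact le_trans Metric.infDist_nonneg (Finset.le_sup' (fun i => Metric.infDist x {y : Fin n → ℝ | ∑ j, a i j * y j = b i}) hi0)
  obtain ⟨y₀, hy₀⟩ := hne
  have hnorm : ‖(fun i : ↥F => (∑ j, a i.1 j * x j) - b i.1 : ↥F → ℝ)‖ ≤ N * M := by
    refine (pi_norm_le_iff_of_nonneg (by positivity)).mpr fun i => ?_
    have hHne : ({y : Fin n → ℝ | ∑ j, a i.1 j * y j = b i.1}).Nonempty := by
      refine ⟨y₀, ?_⟩
      simp only [Set.mem_iInter] at hy₀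
      exact hy₀ i.1 i.2
    have h1 := resid_le_norm_mul_infDist (a i.1) (b i.1) hHne x
    have h2 : Metric.infDist x {y : Fin n → ℝ | ∑ j, a i.1 j * y j = b i.1} ≤ M :=
      Finset.le_sup' (fun i => Metric.infDist x {y : Fin n → ℝ | ∑ j, a i j * y j = b i}) i.2
    have h3 : (∑ j, |a i.1 j|) * Metric.infDist x {y : Fin n → ℝ | ∑ j, a i.1 j * y j = b i.1}
        ≤ N * M := by
      have := Metric.infDist_nonneg (x := x) (s := {y : Fin n → ℝ | ∑ j, a i.1 j * y j = b i.1})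
      nlinarith [hNge i.1, Finset.sum_nonneg (fun j (_ : j ∈ Finset.univ) => abs_nonneg (a i.1 j))]
    calc ‖(∑ j, a i.1 j * x j) - b i.1‖ = |(∑ j, a i.1 j * x j) - b i.1| := Real.norm_eq_abs _
      _ ≤ _ := h1.trans h3
  calc Metric.infDist x (⋂ i ∈ F, {y : Fin n → ℝ | ∑ j, a i j * y j = b i})
      ≤ g F * ‖(fun i : ↥F => (∑ j, a i.1 j * x j) - b i.1 : ↥F → ℝ)‖ := hg F ⟨y₀, hy₀⟩ x
    _ ≤ g F * (N * M) := mul_le_mul_of_nonneg_left hnorm (hg0 F).le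
    _ ≤ G * (N * M) := mul_le_mul_of_nonneg_right (hGF F) (by positivity)
    _ = G * N * M := by ring
end

section
/- Let H_1, …, H_m be finitely many affine hyperplanes in ℝ^n, and let d(x,S) := inf_{y∈S} ‖x−y‖_∞ denote the supremum-norm distance from a point to a set. Then there exists a constant r_c>0 such that for every x∈ℝ^n, the subfamily {H_i : H_i ∩ B_{r_c}(x) ≠ ∅} of hyperplanes meeting the closed sup-norm ball of radius r_c around x is compatible, i.e., its members have a common point (provided the subfamily is nonempty). -/
open Metric

lemma key_lemma (n m : ℕ) (a : Fin m → (Fin n → ℝ)) (b : Fin m → ℝ)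
    (ha : ∀ i, a i ≠ 0) (S : Finset (Fin m))
    (hS : (⋂ i ∈ S, {y : Fin n → ℝ | ∑ j, a i j * y j = b i}) = ∅) :
    ∃ c : ℝ, 0 < c ∧ ∀ x : Fin n → ℝ, ∃ i ∈ S,
      ∀ y ∈ {y : Fin n → ℝ | ∑ j, a i j * y j = b i}, c ≤ dist x y := by
  classical
  -- S is nonempty
  have hSne : S.Nonempty := by
    rcases S.eq_empty_or_nonempty with h | h
    · subst h; simp at hS
    · exact h
  -- linear functional for each i
  set φ : Fin m → ((Fin n → ℝ) →ₗ[ℝ] ℝ) := fun i => ∑ j, a i j • LinearMap.proj j with hφ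
  have hφ_apply : ∀ i x, φ i x = ∑ j, a i j * x j := by
    intro i x
    simp [hφ, LinearMap.sum_apply, LinearMap.smul_apply, smul_eq_mul]
  set L : (Fin n → ℝ) →ₗ[ℝ] ({i // i ∈ S} → ℝ) := LinearMap.pi (fun i => φ i.1) with hL
  set b' : {i // i ∈ S} → ℝ := fun i => b i.1 with hb'
  have hbnot : b' ∉ LinearMap.range L := by
    rintro ⟨x, hx⟩
    have : x ∈ (⋂ i ∈ S, {y : Fin n → ℝ | ∑ j, a i j * y j = b i}) := by
      simp only [Set.mem_iInter, Set.mem_setOf_eq]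
      intro i hi
      have := congrFun hx ⟨i, hi⟩
      rw [← hφ_apply]
      exact this
    rw [hS] at this; exact this
  have hclosed : IsClosed ((LinearMap.range L : Submodule ℝ _) : Set ({i // i ∈ S} → ℝ)) :=
    Submodule.closed_of_finiteDimensional _
  have hrne : ((LinearMap.range L : Submodule ℝ _) : Set ({i // i ∈ S} → ℝ)).Nonempty :=
    ⟨0, Submodule.zero_mem _⟩
  have hδ : 0 < infDist b' ((LinearMap.range L : Submodule ℝ _) : Set _) :=
    (hclosed.notMem_iff_infDist_pos hrne).mp hbnot
  set δ := infDist b' ((LinearMap.range L : Submodule ℝ _) : Set _) with hδdef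
  -- the constant
  set C : ℝ := ∑ i ∈ S, ∑ j, |a i j| with hC
  have hCpos : 0 < C := by
    obtain ⟨i₀, hi₀⟩ := hSne
    have h1 : ∀ i ∈ S, 0 ≤ ∑ j, |a i j| := fun i _ => Finset.sum_nonneg (fun j _ => abs_nonneg _)
    have h2 : 0 < ∑ j, |a i₀ j| := by
      have : ∃ j, a i₀ j ≠ 0 := by
        by_contra h
        push_neg at h
        exact ha i₀ (funext h)
      obtain ⟨j₀, hj₀⟩ := this
      have := abs_pos.mpr hj₀
      calc 0 < |a i₀ j₀| := this
        _ ≤ ∑ j, |a i₀ j| := Finset.single_le_sum (f := fun j => |a i₀ j|) (fun j _ => abs_nonneg _) (Finset.mem_univ j₀)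
    exact Finset.sum_pos' h1 ⟨i₀, hi₀, h2⟩
  refine ⟨δ / C, div_pos hδ hCpos, ?_⟩
  intro x
  have hdx : δ ≤ dist b' (L x) := infDist_le_dist_of_mem (LinearMap.mem_range_self L x)
  -- find a coordinate where dist is at least δ
  have hex : ∃ i : {i // i ∈ S}, δ ≤ dist (b' i) (L x i) := by
    by_contra h
    push_neg at h
    have : dist b' (L x) < δ := by
      rw [dist_pi_lt_iff hδ]
      exact h
    linarith
  obtain ⟨⟨i, hi⟩, hdist⟩ := hex
  refine ⟨i, hi, ?_⟩
  intro y hy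
  have hyH : ∑ j, a i j * y j = b i := hy
  -- |∑ a i j * x j - b i| ≥ δ
  have h1 : δ ≤ |b i - ∑ j, a i j * x j| := by
    have : L x ⟨i, hi⟩ = ∑ j, a i j * x j := hφ_apply i x
    rw [Real.dist_eq] at hdist
    simpa [this] using hdist
  have h2 : |b i - ∑ j, a i j * x j| = |∑ j, a i j * (x j - y j)| := by
    have heq : ∑ j, a i j * (x j - y j) = (∑ j, a i j * x j) - ∑ j, a i j * y j := by
      rw [← Finset.sum_sub_distrib]; exact Finset.sum_congr rfl (fun j _ => by ring)
    rw [heq, hyH, abs_sub_comm]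
  have h3 : |∑ j, a i j * (x j - y j)| ≤ (∑ j, |a i j|) * dist x y := by
    calc |∑ j, a i j * (x j - y j)| ≤ ∑ j, |a i j * (x j - y j)| := Finset.abs_sum_le_sum_abs _ _
      _ = ∑ j, |a i j| * |x j - y j| := by simp [abs_mul]
      _ ≤ ∑ j, |a i j| * dist x y := by
          refine Finset.sum_le_sum (fun j _ => ?_)
          have : |x j - y j| = dist (x j) (y j) := (Real.dist_eq _ _).symm
          rw [this]
          exact mul_le_mul_of_nonneg_left (dist_le_pi_dist x y j) (abs_nonneg _)
      _ = (∑ j, |a i j|) * dist x y := (Finset.sum_mul _ _ _).symm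
  have h4 : (∑ j, |a i j|) ≤ C := by
    rw [hC]
    exact Finset.single_le_sum (f := fun i => ∑ j, |a i j|)
      (fun i _ => Finset.sum_nonneg (fun j _ => abs_nonneg _)) hi
  have h5 : δ ≤ C * dist x y := by
    have hd0 : 0 ≤ dist x y := dist_nonneg
    calc δ ≤ (∑ j, |a i j|) * dist x y := by rw [h2] at h1; linarith
      _ ≤ C * dist x y := mul_le_mul_of_nonneg_right h4 hd0
  rw [div_le_iff₀ hCpos, mul_comm]
  exact h5



/-- For finitely many affine hyperplanes in `ℝⁿ` (with the sup norm),
there is a radius `r_c > 0` such that for every point `x`, the (nonempty) subfamily of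
hyperplanes meeting the closed ball of radius `r_c` around `x` has a common point. -/
theorem hyperplanes_meeting_small_ball_compatible (n m : ℕ)
    (a : Fin m → (Fin n → ℝ)) (b : Fin m → ℝ) (ha : ∀ i, a i ≠ 0) :
    ∃ r : ℝ, 0 < r ∧
      ∀ x : Fin n → ℝ,
        (∃ i, ({y : Fin n → ℝ | ∑ j, a i j * y j = b i}
            ∩ Metric.closedBall x r).Nonempty) →
        (⋂ i ∈ {i : Fin m | ({y : Fin n → ℝ | ∑ j, a i j * y j = b i}
            ∩ Metric.closedBall x r).Nonempty},
          {y : Fin n → ℝ | ∑ j, a i j * y j = b i}).Nonempty := by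
  classical
  -- for each finset choose a constant
  have key : ∀ S : Finset (Fin m), ∃ c : ℝ, 0 < c ∧
      ((⋂ i ∈ S, {y : Fin n → ℝ | ∑ j, a i j * y j = b i}) = ∅ →
        ∀ x : Fin n → ℝ, ∃ i ∈ S,
          ∀ y ∈ {y : Fin n → ℝ | ∑ j, a i j * y j = b i}, c ≤ dist x y) := by
    intro S
    by_cases hS : (⋂ i ∈ S, {y : Fin n → ℝ | ∑ j, a i j * y j = b i}) = ∅
    · obtain ⟨c, hc, h⟩ := key_lemma n m a b ha S hS
      exact ⟨c, hc, fun _ => h⟩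
    · exact ⟨1, one_pos, fun h => absurd h hS⟩
  choose f hf0 hf using key
  have huniv : (Finset.univ : Finset (Finset (Fin m))).Nonempty := ⟨∅, Finset.mem_univ _⟩
  set r : ℝ := (Finset.univ.inf' huniv f) / 2 with hr
  have hrpos : 0 < r := by
    have : 0 < Finset.univ.inf' huniv f := by
      rw [Finset.lt_inf'_iff]
      exact fun S _ => hf0 S
    positivity
  refine ⟨r, hrpos, ?_⟩
  intro x _
  by_contra hcon
  rw [Set.not_nonempty_iff_eq_empty] at hcon
  set S : Finset (Fin m) := Finset.univ.filter
    (fun i => ({y : Fin n → ℝ | ∑ j, a i j * y j = b i} ∩ Metric.closedBall x r).Nonempty)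
    with hSdef
  have hmem : ∀ i, i ∈ S ↔
      ({y : Fin n → ℝ | ∑ j, a i j * y j = b i} ∩ Metric.closedBall x r).Nonempty := by
    intro i; simp [hSdef]
  have hSeq : (⋂ i ∈ S, {y : Fin n → ℝ | ∑ j, a i j * y j = b i}) = ∅ := by
    rw [← hcon]
    apply Set.iInter_congr
    intro i
    have : (i ∈ S) = (i ∈ {i | ({y : Fin n → ℝ | ∑ j, a i j * y j = b i}
        ∩ Metric.closedBall x r).Nonempty}) := by
      simp only [eq_iff_iff]
      rw [hmem i]
      rfl
    rw [this]
  obtain ⟨i, hiS, hi⟩ := hf S hSeq x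
  obtain ⟨y, hyH, hyB⟩ := (hmem i).mp hiS
  have h1 : f S ≤ dist x y := hi y hyH
  have h2 : dist x y ≤ r := by
    rw [Metric.mem_closedBall] at hyB
    rwa [dist_comm]
  have h4 : Finset.univ.inf' huniv f ≤ f S := Finset.inf'_le _ (Finset.mem_univ S)
  have : f S ≤ r := h1.trans h2
  have : r < f S := by
    rw [hr]
    linarith [hf0 S, h4]
  linarith [h1.trans h2]
end

section
/- Let (Ẽ,E∞) be a valid configuration and (y,λ) a thin flow for (Ẽ,E∞) with λ_v>0 for all v∈V. Let Δθ∈ℝ, r_5≥0, and r_6,r_7∈ℝ with r_7 ≥ r_6 and |λ_w−λ_v|·(r_7−r_6) ≥ 5·r_5 for every arc vw∈Ẽ∖E∞ with λ_w≠λ_v. Let z∈ℝ and gap>0 satisfy z ≥ Δθ − r_6 and λ_min·gap > 3·r_5. Let Δℓ∈ℝ^V satisfy Δℓ_w − Δℓ_v ≤ (λ_w−λ_v)(Δθ−r_7) + 3r_5 for every arc vw∈E^>∪E^=, and Δℓ_w − Δℓ_v ≥ (λ_w−λ_v)(Δθ−r_7) − 3r_5 for every arc vw∈E^<∪E^=.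 Let S⊆V be such that Δℓ_v ≤ λ_v·(z−gap) for every v∈S and Δℓ_v ≥ λ_v·z for every v∉S. Then no arc of E^=∪E^> has tail in S and head outside S, and no arc of E^=∪E^< has tail outside S and head in S. -/
open MeasureTheory Set

namespace FOT

/-- A (simple) s-t path in a directed multigraph given by tail/head maps. -/
structure STPath {V E : Type*} (tl hd : E → V) (s t : V) where
  arcs : List E
  ne : arcs ≠ []
  chain : arcs.Chain' fun e f => hd e = tl f
  first_eq : ∀ e, arcs.head? = some e → tl e = s
  last_eq : ∀ e, arcs.getLast? = some e → hd e = t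
  simple : (s :: arcs.map hd).Nodup

/-- The vertices visited by a path. -/
def STPath.verts {V E : Type*} {tl hd : E → V} {s t : V} (p : STPath tl hd s t) : Set V :=
  {v | v = s ∨ ∃ e ∈ p.arcs, hd e = v}

/-- A network: finite directed multigraph, source, sink, capacities, transit times,
network inflow rate; every vertex reachable from `s` and reaching `t`. -/
structure Network (V E : Type*) [Fintype V] [Fintype E] where
  tl : E → V
  hd : E → V
  s : V
  t : V
  s_ne_t : s ≠ t
  cap : E → ℝ
  tau : E → ℝ
  u0 : ℝ
  cap_pos : ∀ e, 0 < cap e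
  tau_pos : ∀ e, 0 < tau e
  u0_pos : 0 < u0
  reach_from_s : ∀ v, Relation.ReflTransGen (fun a b => ∃ e, tl e = a ∧ hd e = b) s v
  reach_to_t : ∀ v, Relation.ReflTransGen (fun a b => ∃ e, tl e = a ∧ hd e = b) v t

variable {V E : Type*} [Fintype V] [Fintype E] [DecidableEq V]

/-- `ν_Σ := Σ_e ν_e + u_0`. -/
noncomputable def Network.capSum (N : Network V E) : ℝ := (∑ e : E, N.cap e) + N.u0

/-- One step along an arc of the subgraph `E'`. -/
def stepIn (N : Network V E) (E' : Set E) (a b : V) : Prop :=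
  ∃ e ∈ E', N.tl e = a ∧ N.hd e = b

/-- A valid configuration `(E', E*)`. -/
structure IsValidConfig (N : Network V E) (E' Estar : Set E) : Prop where
  subset : Estar ⊆ E'
  reach : ∀ v, Relation.ReflTransGen (stepIn N E') N.s v
  on_path : ∀ e ∈ Estar, ∃ p : STPath N.tl N.hd N.s N.t, (∀ f ∈ p.arcs, f ∈ E') ∧ e ∈ p.arcs
  no_cycle : ∀ e ∈ Estar, ¬ ∃ c : List E, c ≠ [] ∧ (∀ f ∈ c, f ∈ E') ∧
    (c.Chain' fun f g => N.hd f = N.tl g) ∧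
    (∀ f g, c.getLast? = some f → c.head? = some g → N.hd f = N.tl g) ∧ e ∈ c

open scoped Classical in
/-- The function `ρ_e` from the thin flow equations. -/
noncomputable def rho (N : Network V E) (Estar : Set E) (ℓ : V → ℝ) (x : E → ℝ) (e : E) : ℝ :=
  if e ∈ Estar then x e / N.cap e else max (ℓ (N.tl e)) (x e / N.cap e)

/-- The thin flow equations for a configuration `(E', E*)`. -/
structure IsThinFlow (N : Network V E) (E' Estar : Set E) (x : E → ℝ) (ℓ : V → ℝ) : Prop where
  nonneg : ∀ e, 0 ≤ x e
  support : ∀ e, e ∉ E' → x e = 0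
  conserve : ∀ v : V,
    (∑ e ∈ Finset.univ.filter (fun e => N.hd e = v), x e)
      - (∑ e ∈ Finset.univ.filter (fun e => N.tl e = v), x e)
      = (if v = N.t then N.u0 else 0) - (if v = N.s then N.u0 else 0)
  source : ℓ N.s = 1
  min_rule : ∀ w, w ≠ N.s →
    IsLeast {y : ℝ | ∃ e ∈ E', N.hd e = w ∧ y = rho N Estar ℓ x e} (ℓ w)
  tight : ∀ e ∈ E', 0 < x e → ℓ (N.hd e) = rho N Estar ℓ x e

/-- `λ_min`, the minimum label. -/
noncomputable def lamMin (N : Network V E) (lam : V → ℝ) : ℝ :=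
  Finset.univ.inf' ⟨N.s, Finset.mem_univ N.s⟩ lam

/-- `ν̲ := min{u_0, min_e ν_e}`. -/
noncomputable def capLow [Nonempty E] (N : Network V E) : ℝ :=
  min N.u0 (Finset.univ.inf' Finset.univ_nonempty N.cap)

/-- The cut `S` defined by small label ratios is not crossed forwards
by arcs of `E^= ∪ E^>` nor backwards by arcs of `E^= ∪ E^<`. -/
theorem cut_arcs_classification (V E : Type*) [Fintype V] [Fintype E]
    [DecidableEq V] (N : Network V E)
    (Et Einf : Set E) (hvc : IsValidConfig N Et Einf)
    (y : E → ℝ) (lam : V → ℝ) (htf : IsThinFlow N Et Einf y lam)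
    (hlam : ∀ v, 0 < lam v)
    (Δθ r5 r6 r7 z gap : ℝ) (hr5 : 0 ≤ r5) (hr76 : r6 ≤ r7)
    (hsep : ∀ e, e ∈ Et → e ∉ Einf → lam (N.hd e) ≠ lam (N.tl e) →
      5 * r5 ≤ |lam (N.hd e) - lam (N.tl e)| * (r7 - r6))
    (hz : Δθ - r6 ≤ z) (hgap : 0 < gap) (hgap' : 3 * r5 < lamMin N lam * gap)
    (Δℓ : V → ℝ)
    (hg : ∀ e, e ∈ Et → e ∉ Einf → lam (N.tl e) ≤ lam (N.hd e) →
      Δℓ (N.hd e) - Δℓ (N.tl e) ≤ (lam (N.hd e) - lam (N.tl e)) * (Δθ - r7) + 3 * r5)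
    (hh : ∀ e, e ∈ Et → e ∉ Einf → lam (N.hd e) ≤ lam (N.tl e) →
      (lam (N.hd e) - lam (N.tl e)) * (Δθ - r7) - 3 * r5 ≤ Δℓ (N.hd e) - Δℓ (N.tl e))
    (S : Set V)
    (hS1 : ∀ v ∈ S, Δℓ v ≤ lam v * (z - gap))
    (hS2 : ∀ v, v ∉ S → lam v * z ≤ Δℓ v) :
    ∀ e, e ∈ Et → e ∉ Einf →
      (lam (N.tl e) ≤ lam (N.hd e) → ¬(N.tl e ∈ S ∧ N.hd e ∉ S)) ∧
      (lam (N.hd e) ≤ lam (N.tl e) → ¬(N.tl e ∉ S ∧ N.hd e ∈ S)) := by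
  intro e heEt heEinf
  have hmin : ∀ v, lamMin N lam ≤ lam v := fun v => Finset.inf'_le _ (Finset.mem_univ v)
  set v := N.tl e with hv
  set w := N.hd e with hw
  constructor
  · intro hle ⟨hvS, hwS⟩
    have h1 := hS1 v hvS
    have h2 := hS2 w hwS
    have h3 := hg e heEt heEinf hle
    have hmv := hmin v
    rcases eq_or_lt_of_le hle with heq | hlt
    · nlinarith [hlam v]
    · have habs : |lam w - lam v| = lam w - lam v := abs_of_pos (by linarith)
      have h4 := hsep e heEt heEinf (by intro h; rw [h] at hlt; exact lt_irrefl _ hlt)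
      rw [habs] at h4
      nlinarith [hlam v, hlam w]
  · intro hle ⟨hvS, hwS⟩
    have h1 := hS2 v hvS
    have h2 := hS1 w hwS
    have h3 := hh e heEt heEinf hle
    have hmw := hmin w
    rcases eq_or_lt_of_le hle with heq | hlt
    · nlinarith [hlam w]
    · have habs : |lam w - lam v| = -(lam w - lam v) := abs_of_neg (by linarith)
      have h4 := hsep e heEt heEinf (by intro h; rw [h] at hlt; exact lt_irrefl _ hlt)
      rw [habs] at h4
      nlinarith [hlam v, hlam w]

end FOT
end

section
/- Let (E',E*) be a valid configuration and (x',ℓ') a thin flow for (E',E*) such that x'_e ≤ u_0 for every arc e∈E (this holds in particular when the support of x' contains no directed cycle). Then ℓ'_v ≤ max{1, u_0/min_{e∈E} ν_e} for every v∈V. -/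
open MeasureTheory Set

namespace FOT

variable {V E : Type*} [Fintype V] [Fintype E] [DecidableEq V]

/-- Thin flow labels are bounded by `max{1, u₀ / min_e ν_e}` whenever
all arc flows are at most `u₀`. -/
theorem thin_flow_labels_bounded (V E : Type*) [Fintype V] [Fintype E]
    [DecidableEq V] [Nonempty E] (N : Network V E)
    (E' Estar : Set E) (hvc : IsValidConfig N E' Estar)
    (x : E → ℝ) (ℓ : V → ℝ) (htf : IsThinFlow N E' Estar x ℓ)
    (hx : ∀ e, x e ≤ N.u0) :
    ∀ v : V, ℓ v ≤ max 1 (N.u0 / Finset.univ.inf' Finset.univ_nonempty N.cap) := by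
  intro v
  set M := max 1 (N.u0 / Finset.univ.inf' Finset.univ_nonempty N.cap) with hM
  have hinf_pos : 0 < Finset.univ.inf' Finset.univ_nonempty N.cap := by
    rw [Finset.lt_inf'_iff]
    exact fun e _ => N.cap_pos e
  have hdiv : ∀ e : E, x e / N.cap e ≤ M := by
    intro e
    refine le_trans ?_ (le_max_right _ _)
    exact div_le_div₀ (le_of_lt N.u0_pos) (hx e) hinf_pos
      (Finset.inf'_le _ (Finset.mem_univ e))
  have hs : ℓ N.s ≤ M := by
    rw [htf.source]; exact le_max_left _ _
  induction hvc.reach v with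
  | refl => exact hs
  | tail _ hstep ih =>
    rename_i b c _
    obtain ⟨e, heE', hta, hhb⟩ := hstep
    by_cases hc : c = N.s
    · rw [hc]; exact hs
    · have hle := (htf.min_rule c hc).2 ⟨e, heE', hhb, rfl⟩
      refine le_trans hle ?_
      unfold rho
      split
      · exact hdiv e
      · rw [hta]
        exact max_le ih (hdiv e)

end FOT
end
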